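/- Let p be a prime, n ≥ 1, and i ∈ {0,…,p^n − 2}. Let g(i) be the number of trailing (p−1)-digits of bin_n(i), i.e. the largest k with (bin_n(i))_ν = p−1 for all ν < k. Then consecutive Gray codewords differ by plus or minus a standard unit vector in exactly that coordinate: gc_n(bin_n(i+1)) − gc_n(bin_n(i)) = ε · e_{g(i)} for some ε ∈ {1, −1}. -/

import Mathlib

/-- The vector `d = (-1,…,-1) ∈ 𝔽_p^n`. -/
def dVec (p n : ℕ) : Fin n → ZMod p := fun _ => -1

/-- The opposite point `x^⊥ = d - x`. -/
def perp (p n : ℕ) (x : Fin n → ZMod p) : Fin n → ZMod p := dVec p n - x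

/-- The standard unit vector `e_i`. -/
def stdBasis (p n : ℕ) (i : Fin n) : Fin n → ZMod p := fun j => if j = i then 1 else 0

/-- `bin_n : ℤ/p^nℤ → 𝔽_p^n`, the vector of p-adic digits. -/
def binN (p n : ℕ) (i : ZMod (p ^ n)) : Fin n → ZMod p :=
  fun ν => (((i.val / p ^ (ν : ℕ)) % p : ℕ) : ZMod p)

/-- The p-adic reflected Gray code `gc_n`, defined recursively: the top digit is kept,
and the lower digits are Gray-coded, reflected (`x' ↦ x'^⊥`) iff the top digit is odd. -/
def grayCode (p : ℕ) : (n : ℕ) → (Fin n → ZMod p) → (Fin n → ZMod p)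
  | 0, x => x
  | n + 1, x =>
    Fin.snoc
      (if (x (Fin.last n)).val % 2 = 0
        then grayCode p n (Fin.init x)
        else grayCode p n (perp p n (Fin.init x)))
      (x (Fin.last n))

def binNat (p n : ℕ) (i : ℕ) : Fin n → ZMod p := fun ν => ((i / p ^ (ν : ℕ) % p : ℕ) : ZMod p)

lemma digit_mod {p m ν : ℕ} (i : ℕ) (h : ν < m) :
    i % p ^ m / p ^ ν % p = i / p ^ ν % p := by
  have hm : p ^ m = p ^ ν * p ^ (m - ν) := by rw [← pow_add]; congr 1; omega
  rw [hm, Nat.mod_mul_right_div_self, Nat.mod_mod_of_dvd _ (dvd_pow_self p (by omega))]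

lemma binNat_mod (p m i : ℕ) : binNat p m (i % p ^ m) = binNat p m i := by
  funext ν; unfold binNat; rw [digit_mod i ν.isLt]

lemma trailing_mod {p : ℕ} (hp : 2 ≤ p) (k r : ℕ) (h : ∀ ν < k, r / p ^ ν % p = p - 1) :
    r % p ^ k = p ^ k - 1 := by
  induction k with
  | zero => simp [Nat.mod_one]
  | succ k ih =>
    have h1 : r % p ^ k = p ^ k - 1 := ih (fun ν hν => h ν (by omega))
    have h2 : r / p ^ k % p = p - 1 := h k (by omega)
    have hpk : 1 ≤ p ^ k := Nat.one_le_pow _ _ (by omega)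
    calc r % p ^ (k+1) = r % (p ^ k * p) := by rw [pow_succ]
      _ = r % p ^ k + p ^ k * (r / p ^ k % p) := Nat.mod_mul
      _ = (p ^ k - 1) + p ^ k * (p - 1) := by rw [h1, h2]
      _ = p ^ (k+1) - 1 := by
          have e2 : p ^ k * (p-1) + p ^ k = p ^ k * p := by rw [← Nat.mul_succ]; congr 1; omega
          have e3 : p ^ k * p = p ^ (k+1) := (pow_succ p k).symm
          omega

lemma aux_key (P A a b : ℕ) (hP : 0 < P) (hb : b < P) (ha : a < A) :
    A * P - 1 - (a * P + b) = (A - 1 - a) * P + (P - 1 - b) := by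
  rw [Nat.sub_mul, Nat.sub_mul, one_mul]
  have h1 : a * P + P ≤ A * P := by
    calc a * P + P = (a+1) * P := by rw [add_mul, one_mul]
      _ ≤ A * P := Nat.mul_le_mul_right _ (by omega)
  omega

lemma aux_div (P A a b : ℕ) (hP : 0 < P) (hb : b < P) (ha : a < A) :
    (A * P - 1 - (a * P + b)) / P = A - 1 - a := by
  rw [aux_key P A a b hP hb ha, add_comm, Nat.add_mul_div_right _ _ hP,
    Nat.div_eq_of_lt (by omega), zero_add]

lemma aux_mod (P A a b : ℕ) (hP : 0 < P) (hb : b < P) (ha : a < A) :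
    (A * P - 1 - (a * P + b)) % P = P - 1 - b := by
  rw [aux_key P A a b hP hb ha, add_comm, Nat.add_mul_mod_self_right,
    Nat.mod_eq_of_lt (by omega)]

lemma digits_sub_div {p m r ν : ℕ} (hp : 2 ≤ p) (hr : r < p ^ m) (hν : ν < m) :
    (p ^ m - 1 - r) / p ^ ν = p ^ (m - ν) - 1 - r / p ^ ν := by
  have hAp : p ^ (m - ν) * p ^ ν = p ^ m := by rw [← pow_add]; congr 1; omega
  have hP : 0 < p ^ ν := Nat.pow_pos (by omega)
  have hbp : r % p ^ ν < p ^ ν := Nat.mod_lt _ hP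
  have haA : r / p ^ ν < p ^ (m - ν) := Nat.div_lt_of_lt_mul (by rw [mul_comm] at hAp; omega)
  have hdm : r / p ^ ν * p ^ ν + r % p ^ ν = r := Nat.div_add_mod' r (p ^ ν)
  calc (p ^ m - 1 - r) / p ^ ν
      = (p ^ (m-ν) * p ^ ν - 1 - (r / p ^ ν * p ^ ν + r % p ^ ν)) / p ^ ν := by rw [hdm, hAp]
    _ = p ^ (m - ν) - 1 - r / p ^ ν := aux_div _ _ _ _ hP hbp haA

lemma digits_sub_mod {p s q : ℕ} (hp : 2 ≤ p) (hs : 1 ≤ s) (hq : q < p ^ s) :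
    (p ^ s - 1 - q) % p = p - 1 - q % p := by
  have hAp : p ^ (s - 1) * p = p ^ s := by rw [← pow_succ]; congr 1; omega
  have hP : 0 < p := by omega
  have hbp : q % p < p := Nat.mod_lt _ hP
  have haA : q / p < p ^ (s - 1) := Nat.div_lt_of_lt_mul (by rw [mul_comm] at hAp; omega)
  have hdm : q / p * p + q % p = q := Nat.div_add_mod' q p
  calc (p ^ s - 1 - q) % p
      = (p ^ (s-1) * p - 1 - (q / p * p + q % p)) % p := by rw [hdm, hAp]
    _ = p - 1 - q % p := aux_mod _ _ _ _ hP hbp haA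

lemma digit_sub {p m r ν : ℕ} (hp : 2 ≤ p) (hr : r < p ^ m) (hν : ν < m) :
    (p ^ m - 1 - r) / p ^ ν % p = p - 1 - r / p ^ ν % p := by
  rw [digits_sub_div hp hr hν]
  have haA : r / p ^ ν < p ^ (m - ν) := by
    have hAp : p ^ ν * p ^ (m - ν) = p ^ m := by rw [← pow_add]; congr 1; omega
    exact Nat.div_lt_of_lt_mul (by rw [hAp]; exact hr)
  exact digits_sub_mod hp (by omega) haA

lemma binNat_init (p m i : ℕ) : Fin.init (binNat p (m+1) i) = binNat p m i := by
  funext ν; simp [Fin.init, binNat]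

lemma perp_binNat {p : ℕ} (hp : 2 ≤ p) (m r : ℕ) (hr : r < p ^ m) :
    perp p m (binNat p m r) = binNat p m (p ^ m - 1 - r) := by
  funext ν
  have hd : r / p ^ (ν : ℕ) % p < p := Nat.mod_lt _ (by omega)
  simp only [perp, dVec, Pi.sub_apply, binNat]
  rw [digit_sub hp hr ν.isLt,
    Nat.cast_sub (show r / p ^ (ν:ℕ) % p ≤ p - 1 by omega),
    Nat.cast_sub (show 1 ≤ p by omega), ZMod.natCast_self, Nat.cast_one]
  ring

lemma cast_eq_neg_one_iff {p d : ℕ} (hp : 2 ≤ p) (hd : d < p) :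
    ((d : ZMod p) = -1) ↔ d = p - 1 := by
  haveI : NeZero p := ⟨by omega⟩
  constructor
  · intro h
    have h2 : ((d : ℕ) : ZMod p) = ((p - 1 : ℕ) : ZMod p) := by
      rw [h, Nat.cast_sub (by omega), ZMod.natCast_self, Nat.cast_one]; ring
    have h3 := congrArg ZMod.val h2
    rwa [ZMod.val_natCast_of_lt hd, ZMod.val_natCast_of_lt (by omega)] at h3
  · rintro rfl; rw [Nat.cast_sub (by omega), ZMod.natCast_self, Nat.cast_one]; ring

lemma snoc_sub_snoc {p : ℕ} (m : ℕ) (a b : Fin m → ZMod p) (c d : ZMod p) :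
    (Fin.snoc a c : Fin (m+1) → ZMod p) - Fin.snoc b d = Fin.snoc (a - b) (c - d) := by
  funext j
  refine Fin.lastCases ?_ ?_ j <;>
    simp [Fin.snoc_last, Fin.snoc_castSucc]

lemma smul_snoc {p : ℕ} (m : ℕ) (ε : ZMod p) (v : Fin m → ZMod p) (c : ZMod p) :
    ε • (Fin.snoc v c : Fin (m+1) → ZMod p) = Fin.snoc (ε • v) (ε • c) := by
  funext j
  refine Fin.lastCases ?_ ?_ j <;>
    simp [Fin.snoc_last, Fin.snoc_castSucc]

lemma stdBasis_castSucc (p m k : ℕ) (hk : k < m) (hk' : k < m + 1) :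
    stdBasis p (m+1) ⟨k, hk'⟩ = Fin.snoc (stdBasis p m ⟨k, hk⟩) 0 := by
  funext j
  refine Fin.lastCases ?_ ?_ j
  · simp [stdBasis, Fin.snoc_last, Fin.ext_iff]; omega
  · intro jj
    simp [stdBasis, Fin.snoc_castSucc, Fin.ext_iff]

lemma stdBasis_last (p m : ℕ) (h : m < m + 1) :
    stdBasis p (m+1) ⟨m, h⟩ = Fin.snoc (0 : Fin m → ZMod p) 1 := by
  funext j
  refine Fin.lastCases ?_ ?_ j
  · simp [stdBasis, Fin.snoc_last, Fin.ext_iff]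
  · intro jj
    simp [stdBasis, Fin.snoc_castSucc, Fin.ext_iff]
    omega

lemma grayCode_binNat_succ (p m j : ℕ) :
    grayCode p (m+1) (binNat p (m+1) j) =
      Fin.snoc (if (((j / p ^ m % p : ℕ) : ZMod p)).val % 2 = 0
        then grayCode p m (binNat p m j)
        else grayCode p m (perp p m (binNat p m j))) ((j / p ^ m % p : ℕ) : ZMod p) := by
  show Fin.snoc _ _ = _
  rw [binNat_init]
  rfl

lemma lt_of_ne_pred {p q : ℕ} (h1 : q < p) (h2 : q ≠ p - 1) : q + 1 < p := by omega

lemma sub_succ_add_lt {P r : ℕ} (h : r + 1 < P) : (P - 1 - (r + 1)) + 1 < P := by omega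

lemma succ_mod_ne_zero {p c : ℕ} (hp : 2 ≤ p) (h : c % p ≠ p - 1) : (c + 1) % p ≠ 0 := by
  intro h0
  obtain ⟨t, ht⟩ := Nat.dvd_of_mod_eq_zero h0
  have htne : t ≠ 0 := by rintro rfl; simp at ht
  have hpt : p * t = p * (t - 1) + p := by rw [← Nat.mul_succ]; congr 1; omega
  have hc : c = p * (t - 1) + (p - 1) := by omega
  apply h
  rw [hc, Nat.mul_add_mod]
  exact Nat.mod_eq_of_lt (by omega)

lemma key (p : ℕ) (hp : 2 ≤ p) : ∀ n, ∀ i k, ∀ hk : k < n, i + 1 < p ^ n →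
    (∀ ν, ν < k → i / p ^ ν % p = p - 1) → i / p ^ k % p ≠ p - 1 →
    ∃ ε : ZMod p, (ε = 1 ∨ ε = -1) ∧
      grayCode p n (binNat p n (i + 1)) - grayCode p n (binNat p n i)
        = ε • stdBasis p n ⟨k, hk⟩ := by
  intro n
  induction n with
  | zero => intro i k hk _ _ _; exact absurd hk (Nat.not_lt_zero k)
  | succ m ih =>
    intro i k hk hi htr hst
    haveI : NeZero p := ⟨by omega⟩
    have hppos : 0 < p := by omega
    have hpm : 0 < p ^ m := Nat.pow_pos hppos
    have hq : i / p ^ m < p := by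
      apply Nat.div_lt_of_lt_mul; rw [← pow_succ]; omega
    have hq1 : i / p ^ m % p = i / p ^ m := Nat.mod_eq_of_lt hq
    have hdm := Nat.div_add_mod i (p ^ m)
    rw [grayCode_binNat_succ p m (i+1), grayCode_binNat_succ p m i]
    rcases Nat.lt_or_ge k m with hkm | hkm
    · -- k < m : no carry into top digit
      have hr : i % p ^ m < p ^ m := Nat.mod_lt _ hpm
      have dtr : ∀ ν, ν < k → (i % p ^ m) / p ^ ν % p = p - 1 := fun ν hν => by
        rw [digit_mod i (by omega : ν < m)]; exact htr ν hν
      have dst : (i % p ^ m) / p ^ k % p ≠ p - 1 := by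
        rw [digit_mod i hkm]; exact hst
      have hrne : i % p ^ m ≠ p ^ m - 1 := by
        intro h
        apply dst
        rw [h, show p ^ m - 1 = p ^ m - 1 - 0 from rfl, digit_sub hp (by omega) hkm]
        simp
      have hr1 : i % p ^ m + 1 < p ^ m := by omega
      have hi1 : i + 1 = p ^ m * (i / p ^ m) + (i % p ^ m + 1) := by omega
      have hi1div : (i + 1) / p ^ m = i / p ^ m := by
        rw [hi1, Nat.mul_add_div hpm, Nat.div_eq_of_lt hr1, add_zero]
      have hi1mod : (i + 1) % p ^ m = i % p ^ m + 1 := by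
        rw [hi1, Nat.mul_add_mod, Nat.mod_eq_of_lt hr1]
      have e1 : binNat p m (i + 1) = binNat p m (i % p ^ m + 1) := by
        rw [← binNat_mod p m (i + 1), hi1mod]
      have e2 : binNat p m i = binNat p m (i % p ^ m) := (binNat_mod p m i).symm
      rw [hi1div, e1, e2]
      by_cases hpar : (((i / p ^ m % p : ℕ) : ZMod p)).val % 2 = 0
      · simp only [if_pos hpar]
        obtain ⟨ε, hε, hd⟩ := ih (i % p ^ m) k hkm hr1 dtr dst
        refine ⟨ε, hε, ?_⟩
        rw [snoc_sub_snoc, sub_self, hd, stdBasis_castSucc p m k hkm hk, smul_snoc, smul_zero]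
      · simp only [if_neg hpar]
        rw [perp_binNat hp m _ hr, perp_binNat hp m _ hr1]
        have hj1 : p ^ m - 1 - (i % p ^ m) = (p ^ m - 1 - (i % p ^ m + 1)) + 1 := by omega
        have hj1lt : (p ^ m - 1 - (i % p ^ m + 1)) + 1 < p ^ m := sub_succ_add_lt hr1
        have hrk : (i % p ^ m) % p ^ k = p ^ k - 1 := trailing_mod hp k _ dtr
        have hpk : 0 < p ^ k := Nat.pow_pos hppos
        have hdmk := Nat.div_add_mod (i % p ^ m) (p ^ k)
        have hdvd : i % p ^ m + 1 = p ^ k * ((i % p ^ m) / p ^ k + 1) := by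
          rw [Nat.mul_succ]; omega
        have hr1tr : ∀ ν, ν < k → (i % p ^ m + 1) / p ^ ν % p = 0 := by
          intro ν hν
          rw [← digit_mod (i % p ^ m + 1) hν,
            show (i % p ^ m + 1) % p ^ k = 0 by rw [hdvd]; exact Nat.mul_mod_right _ _]
          simp
        have jtr : ∀ ν, ν < k → (p ^ m - 1 - (i % p ^ m + 1)) / p ^ ν % p = p - 1 := by
          intro ν hν
          rw [digit_sub hp (by omega) (by omega), hr1tr ν hν, Nat.sub_zero]
        have hd1 : (i % p ^ m + 1) / p ^ k = (i % p ^ m) / p ^ k + 1 := by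
          rw [hdvd, Nat.mul_div_cancel_left _ hpk]
        have jst : (p ^ m - 1 - (i % p ^ m + 1)) / p ^ k % p ≠ p - 1 := by
          rw [digit_sub hp (by omega) hkm, hd1]
          have := succ_mod_ne_zero hp dst
          have hlt : ((i % p ^ m) / p ^ k + 1) % p < p := Nat.mod_lt _ hppos
          omega
        obtain ⟨ε, hε, hd⟩ := ih (p ^ m - 1 - (i % p ^ m + 1)) k hkm hj1lt jtr jst
        refine ⟨-ε, ?_, ?_⟩
        · rcases hε with h | h
          · subst h; exact Or.inr rfl
          · subst h; exact Or.inl (neg_neg 1)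
        rw [hj1, snoc_sub_snoc, sub_self,
          show grayCode p m (binNat p m (p ^ m - 1 - (i % p ^ m + 1))) -
              grayCode p m (binNat p m ((p ^ m - 1 - (i % p ^ m + 1)) + 1))
            = (-ε) • stdBasis p m ⟨k, hkm⟩ by rw [neg_smul, ← hd, neg_sub]]
        rw [stdBasis_castSucc p m k hkm hk, smul_snoc, smul_zero]
    · -- k = m : all lower digits roll over
      have hkm' : k = m := by omega
      subst hkm'
      have hall : i % p ^ k = p ^ k - 1 := trailing_mod hp k i htr
      have hqne : i / p ^ k ≠ p - 1 := by rwa [hq1] at hst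
      have h1 : i + 1 = p ^ k * (i / p ^ k + 1) := by rw [Nat.mul_succ]; omega
      have hi1div : (i + 1) / p ^ k = i / p ^ k + 1 := by
        rw [h1, Nat.mul_div_cancel_left _ hpm]
      have hi1mod : (i + 1) % p ^ k = 0 := by rw [h1]; exact Nat.mul_mod_right _ _
      have hq1p : i / p ^ k + 1 < p := lt_of_ne_pred hq hqne
      have e1 : binNat p k (i + 1) = binNat p k 0 := by
        rw [← binNat_mod p k (i + 1), hi1mod]
      have e2 : binNat p k i = binNat p k (p ^ k - 1) := by
        rw [← binNat_mod p k i, hall]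
      have e3 : perp p k (binNat p k (p ^ k - 1)) = binNat p k 0 := by
        rw [perp_binNat hp k _ (Nat.sub_lt hpm Nat.one_pos)]
        rw [Nat.sub_self]
      have e4 : perp p k (binNat p k 0) = binNat p k (p ^ k - 1) := by
        rw [perp_binNat hp k 0 hpm]
        rw [Nat.sub_zero]
      have v1 : ((((i + 1) / p ^ k % p : ℕ) : ZMod p)).val = i / p ^ k + 1 := by
        rw [hi1div, Nat.mod_eq_of_lt hq1p, ZMod.val_natCast_of_lt hq1p]
      have v2 : (((i / p ^ k % p : ℕ) : ZMod p)).val = i / p ^ k := by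
        rw [hq1, ZMod.val_natCast_of_lt hq]
      have hc : (((i + 1) / p ^ k % p : ℕ) : ZMod p) - ((i / p ^ k % p : ℕ) : ZMod p) = 1 := by
        rw [hi1div, Nat.mod_eq_of_lt hq1p, hq1]
        push_cast
        ring
      rw [v1, v2, e1, e2, e3, e4]
      refine ⟨1, Or.inl rfl, ?_⟩
      by_cases hpar : (i / p ^ k) % 2 = 0
      · rw [if_pos hpar, if_neg (by omega : ¬ (i / p ^ k + 1) % 2 = 0),
          snoc_sub_snoc, sub_self, hc, stdBasis_last, one_smul]
      · rw [if_neg hpar, if_pos (by omega : (i / p ^ k + 1) % 2 = 0),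
          snoc_sub_snoc, sub_self, hc, stdBasis_last, one_smul]

/-- consecutive p-adic Gray codewords differ by plus or minus the standard
unit vector at coordinate `g(i)`, the number of trailing `(p-1)`-digits of `bin_n(i)`. -/
theorem grayCode_consecutive_diff (p n : ℕ) (hp : p.Prime) (hn : 1 ≤ n)
    (i : ℕ) (hi : i + 1 < p ^ n) (k : ℕ) (hk : k < n)
    (htrail : ∀ ν : Fin n, (ν : ℕ) < k → binN p n (i : ZMod (p ^ n)) ν = -1)
    (hstop : binN p n (i : ZMod (p ^ n)) ⟨k, hk⟩ ≠ -1) :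
    ∃ ε : ZMod p, (ε = 1 ∨ ε = -1) ∧
      grayCode p n (binN p n ((i + 1 : ℕ) : ZMod (p ^ n))) -
        grayCode p n (binN p n (i : ZMod (p ^ n))) = ε • stdBasis p n ⟨k, hk⟩ := by
  have hp2 := hp.two_le
  haveI : NeZero (p ^ n) := ⟨by positivity⟩
  have hlt : i < p ^ n := by omega
  have hval : ((i : ZMod (p ^ n))).val = i := ZMod.val_natCast_of_lt hlt
  have hval1 : (((i + 1 : ℕ) : ZMod (p ^ n))).val = i + 1 := ZMod.val_natCast_of_lt hi
  have hb : binN p n (i : ZMod (p ^ n)) = binNat p n i := by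
    funext ν; unfold binN binNat; rw [hval]
  have hb1 : binN p n ((i + 1 : ℕ) : ZMod (p ^ n)) = binNat p n (i + 1) := by
    funext ν; unfold binN binNat; rw [hval1]
  rw [hb, hb1]
  apply key p hp2 n i k hk hi
  · intro ν hν
    have h := htrail ⟨ν, by omega⟩ hν
    rw [hb] at h
    exact (cast_eq_neg_one_iff hp2 (Nat.mod_lt _ (by omega))).mp h
  · intro h
    apply hstop
    rw [hb]
    exact (cast_eq_neg_one_iff hp2 (Nat.mod_lt _ (by omega))).mpr h
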